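/- Let A and B be positive semidefinite matrices with positive traces and let θ ∈ [0,1] with θA + (1−θ)B having positive trace. Then Φ(θA + (1−θ)B) − θΦ(A) − (1−θ)Φ(B) is positive semidefinite, i.e., the map Φ(A) = A − A²/Tr(A) is concave with respect to the Loewner order. -/

import Mathlib

open Matrix


lemma psd_smul_aux {n : ℕ} {P : Matrix (Fin n) (Fin n) ℝ} (hP : P.PosSemidef)
    {r : ℝ} (hr : 0 ≤ r) : (r • P).PosSemidef := by
  refine ⟨?_, fun x => ?_⟩
  · unfold Matrix.IsHermitian
    rw [Matrix.conjTranspose_smul, hP.1]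
    simp
  · have := hP.2 x
    simpa [Finsupp.mul_sum, mul_assoc, mul_left_comm] using mul_nonneg hr this

/-- Concavity of `Φ(A) = A − A²/Tr(A)` with respect to the Loewner order. -/
theorem phi_concave {N : ℕ} (A B : Matrix (Fin N) (Fin N) ℝ)
    (hA : A.PosSemidef) (hB : B.PosSemidef)
    (htrA : 0 < A.trace) (htrB : 0 < B.trace)
    (θ : ℝ) (hθ0 : 0 ≤ θ) (hθ1 : θ ≤ 1)
    (htrC : 0 < (θ • A + (1 - θ) • B).trace) :
    (((θ • A + (1 - θ) • B) - (θ • A + (1 - θ) • B).trace⁻¹ •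
        ((θ • A + (1 - θ) • B) * (θ • A + (1 - θ) • B)))
      - θ • (A - A.trace⁻¹ • (A * A))
      - (1 - θ) • (B - B.trace⁻¹ • (B * B))).PosSemidef := by
  set a := A.trace with ha
  set b := B.trace with hb
  have hC : (θ • A + (1 - θ) • B).trace = θ * a + (1 - θ) * b := by
    simp [Matrix.trace_add, Matrix.trace_smul, smul_eq_mul]
    rfl
  set c : ℝ := θ * a + (1 - θ) * b with hc
  have hcpos : 0 < c := hC ▸ htrC
  have ha0 : a ≠ 0 := ne_of_gt htrA
  have hb0 : b ≠ 0 := ne_of_gt htrB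
  have hc0 : c ≠ 0 := ne_of_gt hcpos
  set M := b • A - a • B with hM
  have hMherm : Mᵀ = M := by
    rw [hM, Matrix.transpose_sub, Matrix.transpose_smul, Matrix.transpose_smul,
      ← Matrix.conjTranspose_eq_transpose_of_trivial A,
      ← Matrix.conjTranspose_eq_transpose_of_trivial B, hA.1, hB.1]
  have key : (((θ • A + (1 - θ) • B) - (θ • A + (1 - θ) • B).trace⁻¹ •
        ((θ • A + (1 - θ) • B) * (θ • A + (1 - θ) • B)))
      - θ • (A - A.trace⁻¹ • (A * A))
      - (1 - θ) • (B - B.trace⁻¹ • (B * B)))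
      = (θ * (1 - θ) * (c * a * b)⁻¹) • (M * M) := by
    rw [hC, hM, ← ha, ← hb, hc]
    have hc0' : θ * a + (1 - θ) * b ≠ 0 := hc0
    simp only [Matrix.mul_add, Matrix.add_mul, Matrix.mul_sub, Matrix.sub_mul,
      Matrix.smul_mul, Matrix.mul_smul, smul_smul, smul_sub, smul_add]
    match_scalars <;> field_simp <;> ring
  rw [key]
  have hpsd : (M * M).PosSemidef := by
    have := Matrix.posSemidef_conjTranspose_mul_self M
    rwa [Matrix.conjTranspose_eq_transpose_of_trivial, hMherm] at this
  refine psd_smul_aux hpsd ?_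
  have : 0 ≤ θ * (1 - θ) := mul_nonneg hθ0 (by linarith)
  positivity
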